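/- arXiv:1510.00475 — 2 statements merged into one kernel-verified Lean document; each statement's English description precedes it below -/
import Mathlib

section
/- Let z₁, z₂, z₃ be nonzero vectors in a real inner product space with z₁ + z₂ + z₃ = 0, and define b_j = ‖z_j‖² / (‖z₁‖² + ‖z₂‖² + ‖z₃‖²) for j = 1,2,3. Then b₁² + b₂² + b₃² = (2 + 4(‖z₁‖²‖z₂‖² − ⟨z₁,z₂⟩²)/(‖z₁‖⁴ + ‖z₂‖⁴ + ‖z₃‖⁴))⁻¹. -/
theorem stmt3 {E : Type*} [NormedAddCommGroup E] [InnerProductSpace ℝ E]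
    (z₁ z₂ z₃ : E) (h1 : z₁ ≠ 0) (h2 : z₂ ≠ 0) (h3 : z₃ ≠ 0)
    (h : z₁ + z₂ + z₃ = 0)
    (b : Fin 3 → ℝ)
    (hb : ∀ j, b j = ‖![z₁, z₂, z₃] j‖ ^ 2 / (‖z₁‖ ^ 2 + ‖z₂‖ ^ 2 + ‖z₃‖ ^ 2)) :
    b 0 ^ 2 + b 1 ^ 2 + b 2 ^ 2
      = (2 + 4 * (‖z₁‖ ^ 2 * ‖z₂‖ ^ 2 - (inner ℝ z₁ z₂ : ℝ) ^ 2)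
            / (‖z₁‖ ^ 4 + ‖z₂‖ ^ 4 + ‖z₃‖ ^ 4))⁻¹ := by
  have hz3 : z₃ = -(z₁ + z₂) := by
    rw [eq_neg_iff_add_eq_zero, ← h]; abel
  have hd : ‖z₃‖ ^ 2 = ‖z₁‖ ^ 2 + ‖z₂‖ ^ 2 + 2 * (inner ℝ z₁ z₂ : ℝ) := by
    rw [hz3, norm_neg, norm_add_sq_real]; ring
  set a := ‖z₁‖ ^ 2 with ha'
  set c := ‖z₂‖ ^ 2 with hc'
  set d := ‖z₃‖ ^ 2 with hd'
  have hp : (inner ℝ z₁ z₂ : ℝ) = (d - a - c) / 2 := by rw [hd]; ring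
  have ha : 0 < a := pow_pos (norm_pos_iff.mpr h1) 2
  have hc : 0 < c := pow_pos (norm_pos_iff.mpr h2) 2
  have hdp : 0 < d := pow_pos (norm_pos_iff.mpr h3) 2
  have h4a : ‖z₁‖ ^ 4 = a ^ 2 := by rw [ha']; ring
  have h4c : ‖z₂‖ ^ 4 = c ^ 2 := by rw [hc']; ring
  have h4d : ‖z₃‖ ^ 4 = d ^ 2 := by rw [hd']; ring
  have hS : a ^ 2 + c ^ 2 + d ^ 2 ≠ 0 := by positivity
  have hT : a + c + d ≠ 0 := by positivity
  have key : 2 + 4 * (a * c - (inner ℝ z₁ z₂ : ℝ) ^ 2) / (‖z₁‖ ^ 4 + ‖z₂‖ ^ 4 + ‖z₃‖ ^ 4)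
      = (a + c + d) ^ 2 / (a ^ 2 + c ^ 2 + d ^ 2) := by
    rw [h4a, h4c, h4d, hp]
    field_simp
    ring
  rw [key, inv_div, hb 0, hb 1, hb 2]
  simp only [Matrix.cons_val_zero, Matrix.cons_val_one, Matrix.head_cons,
    Matrix.cons_val_two, Matrix.tail_cons]
  rw [← ha', ← hc', ← hd']
  field_simp
end

section
/- Let z₁, z₂, z₃ be nonzero vectors in a real inner product space with z₁ + z₂ + z₃ = 0, and suppose z₁ and z₂ are linearly independent. Define b_j = ‖z_j‖²/(‖z₁‖²+‖z₂‖²+‖z₃‖²). Then b₁² + b₂² + b₃² < 1/2. -/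
private lemma stmt4_aux {E : Type*} [AddCommGroup E] [Module ℝ E] {s c : ℝ} {u v : E}
    (hs : s ≠ 0) (h : s • u = c • v) : (c / s) • v = u := by
  rw [div_eq_inv_mul, mul_smul, ← h, inv_smul_smul₀ hs]

theorem stmt4 {E : Type*} [NormedAddCommGroup E] [InnerProductSpace ℝ E]
    (z₁ z₂ z₃ : E) (h1 : z₁ ≠ 0) (h2 : z₂ ≠ 0) (h3 : z₃ ≠ 0)
    (h : z₁ + z₂ + z₃ = 0)
    (hind : LinearIndependent ℝ ![z₁, z₂])
    (b : Fin 3 → ℝ)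
    (hb : ∀ j, b j = ‖![z₁, z₂, z₃] j‖ ^ 2 / (‖z₁‖ ^ 2 + ‖z₂‖ ^ 2 + ‖z₃‖ ^ 2)) :
    b 0 ^ 2 + b 1 ^ 2 + b 2 ^ 2 < 1 / 2 := by
  have hdep : ∀ a : ℝ, a • z₂ ≠ z₁ := (linearIndependent_fin2.mp hind).2
  have h3' : z₃ = -(z₁ + z₂) := by
    rw [eq_neg_iff_add_eq_zero, add_comm, h]
  have h1' : z₁ = -(z₂ + z₃) := by rw [h3']; abel
  have h2' : z₂ = -(z₁ + z₃) := by rw [h3']; abel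
  have hs12 : ¬ SameRay ℝ z₁ z₂ := by
    intro hs
    obtain ⟨r, s, hr, hs', heq⟩ := hs.exists_pos h1 h2
    exact hdep _ (stmt4_aux (ne_of_gt hr) heq)
  have hs23 : ¬ SameRay ℝ z₂ z₃ := by
    intro hs
    obtain ⟨r, s, hr, hs', heq⟩ := hs.exists_pos h2 h3
    rw [h3'] at heq
    have key : s • z₁ = (-(r + s)) • z₂ := by linear_combination (norm := module) heq
    exact hdep _ (stmt4_aux (ne_of_gt hs') key)
  have hs13 : ¬ SameRay ℝ z₁ z₃ := by
    intro hs
    obtain ⟨r, s, hr, hs', heq⟩ := hs.exists_pos h1 h3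
    rw [h3'] at heq
    have key : (r + s) • z₁ = (-s) • z₂ := by linear_combination (norm := module) heq
    exact hdep _ (stmt4_aux (ne_of_gt (by linarith)) key)
  have t3 : ‖z₃‖ < ‖z₁‖ + ‖z₂‖ := by
    rw [h3', norm_neg]; exact norm_add_lt_of_not_sameRay hs12
  have t1 : ‖z₁‖ < ‖z₂‖ + ‖z₃‖ := by
    rw [h1', norm_neg]; exact norm_add_lt_of_not_sameRay hs23
  have t2 : ‖z₂‖ < ‖z₁‖ + ‖z₃‖ := by
    rw [h2', norm_neg]; exact norm_add_lt_of_not_sameRay hs13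
  have n1 : 0 < ‖z₁‖ := norm_pos_iff.mpr h1
  have n2 : 0 < ‖z₂‖ := norm_pos_iff.mpr h2
  have n3 : 0 < ‖z₃‖ := norm_pos_iff.mpr h3
  set x := ‖z₁‖; set y := ‖z₂‖; set z := ‖z₃‖
  have hS : 0 < x ^ 2 + y ^ 2 + z ^ 2 := by positivity
  have e0 := hb 0
  have e1 := hb 1
  have e2 := hb 2
  simp only [Matrix.cons_val_zero, Matrix.cons_val_one, Matrix.head_cons,
    Matrix.cons_val_two, Matrix.tail_cons] at e0 e1 e2
  rw [e0, e1, e2, div_pow, div_pow, div_pow, ← add_div, ← add_div,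
    div_lt_iff₀ (by positivity)]
  nlinarith [mul_pos (mul_pos (mul_pos (by linarith : (0:ℝ) < x + y + z)
    (by linarith : (0:ℝ) < -x + y + z)) (by linarith : (0:ℝ) < x - y + z))
    (by linarith : (0:ℝ) < x + y - z), sq_nonneg x, sq_nonneg y, sq_nonneg z]
end
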